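/- Define D(g) = (d/ζ(2))·f(g) where d = (∏_{j≥2} ζ(j))^{-1} and f is the multiplicative function with f(p) = (2p−1)/(p²(p−1)) for primes p. Then ∑_{g≥1} D(g) = 1 but ∑_{g≥1} g·D(g) = ∞; in particular, since D(p) ≥ C/p² for some constant C > 0 and ∑_{p prime} 1/p diverges, the expectation of g under the distribution D is infinite. -/

import Mathlib

open Filter

/-- Real value of the Riemann zeta function at a natural number argument. -/
noncomputable def zetaR (k : ℕ) : ℝ := ∑' n : ℕ, (1 : ℝ) / (n + 1 : ℝ) ^ k

/-- The functions `f_n` at prime powers: `f 1 p α = p^{-2α}` and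
`f (n+1) p α = ∑_{i=0}^{α} p^{-(n+1) i} f n p (α - i)`. -/
noncomputable def fseq : ℕ → ℕ → ℕ → ℝ
  | 0, _, _ => 0
  | 1, p, α => 1 / (p : ℝ) ^ (2 * α)
  | (n + 2), p, α =>
      ∑ i ∈ Finset.range (α + 1), (1 / (p : ℝ) ^ ((n + 2) * i)) * fseq (n + 1) p (α - i)

namespace GcdAux

lemma fseq_one (p α : ℕ) : fseq 1 p α = 1 / (p : ℝ) ^ (2 * α) := rfl

lemma fseq_step (n p α : ℕ) :
    fseq (n + 2) p α =
      ∑ i ∈ Finset.range (α + 1), (1 / (p : ℝ) ^ ((n + 2) * i)) * fseq (n + 1) p (α - i) := rfl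

lemma fseq_nonneg (p : ℕ) : ∀ n α, 0 ≤ fseq n p α := by
  intro n
  induction n with
  | zero => intro α; simp [fseq]
  | succ n ih =>
    intro α
    cases n with
    | zero => rw [fseq_one]; positivity
    | succ m =>
      rw [fseq_step]
      exact Finset.sum_nonneg fun i _ => mul_nonneg (by positivity) (ih _)

lemma fseq_zero_eq_one (p : ℕ) : ∀ n, fseq (n + 1) p 0 = 1 := by
  intro n
  induction n with
  | zero => simp [fseq_one]
  | succ m ih =>
    rw [fseq_step]
    simpa using ih

lemma fseq_le_succ (p : ℕ) (n α : ℕ) : fseq (n + 1) p α ≤ fseq (n + 2) p α := by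
  rw [fseq_step]
  have h0 : (0 : ℕ) ∈ Finset.range (α + 1) := by simp
  calc fseq (n + 1) p α
      = (1 / (p : ℝ) ^ ((n + 2) * 0)) * fseq (n + 1) p (α - 0) := by simp
    _ ≤ ∑ i ∈ Finset.range (α + 1), (1 / (p : ℝ) ^ ((n + 2) * i)) * fseq (n + 1) p (α - i) :=
        Finset.single_le_sum (f := fun i => (1 / (p : ℝ) ^ ((n + 2) * i)) * fseq (n + 1) p (α - i))
          (fun i _ => mul_nonneg (by positivity) (fseq_nonneg p _ _)) h0

/-- `Zf k` is `n ↦ n^{-(k+2)}` as an arithmetic function. -/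
noncomputable def Zf (k : ℕ) : ArithmeticFunction ℝ :=
  ⟨fun n => 1 / (n : ℝ) ^ (k + 2), by simp⟩

lemma Zf_apply (k n : ℕ) : Zf k n = 1 / (n : ℝ) ^ (k + 2) := rfl

noncomputable def Gf : ℕ → ArithmeticFunction ℝ
  | 0 => Zf 0
  | (N + 1) => Zf N * Gf N

lemma Zf_mult (k : ℕ) : (Zf k).IsMultiplicative := by
  constructor
  · simp [Zf_apply]
  · intro m n _
    simp only [Zf_apply]
    push_cast
    rw [mul_pow, one_div, one_div, one_div, mul_inv]

lemma Gf_mult : ∀ N, (Gf N).IsMultiplicative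
  | 0 => Zf_mult 0
  | (N + 1) => (Zf_mult N).mul (Gf_mult N)

lemma Gf_prime_pow {p : ℕ} (hp : p.Prime) : ∀ N α, Gf N (p ^ α) = fseq (N + 1) p α := by
  intro N
  induction N with
  | zero =>
    intro α
    show Zf 0 (p ^ α) = _
    rw [Zf_apply, fseq_one]
    push_cast
    rw [← pow_mul, mul_comm]
  | succ N ih =>
    intro α
    show (Zf N * Gf N) (p ^ α) = fseq (N + 2) p α
    rw [ArithmeticFunction.mul_apply,
      Nat.sum_divisorsAntidiagonal (f := fun a b => Zf N a * Gf N b),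
      Nat.sum_divisors_prime_pow hp, fseq_step]
    refine Finset.sum_congr rfl fun i hi => ?_
    rw [Finset.mem_range] at hi
    rw [Nat.pow_div (by omega) hp.pos, ih, Zf_apply]
    congr 2
    push_cast
    rw [← pow_mul, mul_comm]

lemma Gf_nonneg : ∀ N n, 0 ≤ Gf N n := by
  intro N
  induction N with
  | zero => intro n; show (0:ℝ) ≤ Zf 0 n; rw [Zf_apply]; positivity
  | succ N ih =>
    intro n
    show (0:ℝ) ≤ (Zf N * Gf N) n
    rw [ArithmeticFunction.mul_apply]
    exact Finset.sum_nonneg fun x _ => mul_nonneg (by rw [Zf_apply]; positivity) (ih _)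

lemma hasSum_zetaR (k : ℕ) :
    HasSum (fun n : ℕ => 1 / ((n : ℝ) + 1) ^ (k + 2)) (zetaR (k + 2)) := by
  have h : Summable (fun n : ℕ => 1 / (n : ℝ) ^ (k + 2)) :=
    (Real.summable_one_div_nat_pow).mpr (by omega)
  have h2 := h.comp_injective (add_left_injective 1)
  have h3 : Summable (fun n : ℕ => 1 / ((n : ℝ) + 1) ^ (k + 2)) := by
    refine h2.congr fun n => ?_
    simp [Function.comp]
  exact h3.hasSum

lemma one_le_zetaR (k : ℕ) : 1 ≤ zetaR (k + 2) := by
  have h := le_hasSum (hasSum_zetaR k) 0 (fun j _ => by positivity)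
  simpa using h

lemma zetaR_pos (k : ℕ) : 0 < zetaR (k + 2) := lt_of_lt_of_le one_pos (one_le_zetaR k)

lemma hasSum_Zf (k : ℕ) : HasSum (⇑(Zf k)) (zetaR (k + 2)) := by
  have hs : Summable (fun n : ℕ => 1 / (n : ℝ) ^ (k + 2)) :=
    (Real.summable_one_div_nat_pow).mpr (by omega)
  have hs' : Summable (⇑(Zf k)) := by
    refine hs.congr fun n => ?_
    rw [Zf_apply]
  rw [hs'.hasSum_iff, hs'.tsum_eq_zero_add]
  have h0 : Zf k 0 = 0 := (Zf k).map_zero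
  rw [h0, zero_add, ← (hasSum_zetaR k).tsum_eq]
  refine tsum_congr fun n => ?_
  rw [Zf_apply]
  push_cast
  ring_nf

lemma hasSum_mulArith {F G : ArithmeticFunction ℝ} {a b : ℝ}
    (ha : HasSum (⇑F) a) (hb : HasSum (⇑G) b) : HasSum (⇑(F * G)) (a * b) := by
  have hFn : Summable fun n => ‖F n‖ := by simpa [Real.norm_eq_abs] using ha.summable.abs
  have hGn : Summable fun n => ‖G n‖ := by simpa [Real.norm_eq_abs] using hb.summable.abs
  have hsum : Summable fun x : ℕ × ℕ => F x.1 * G x.2 := summable_mul_of_summable_norm hFn hGn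
  have key := (ha.mul hb hsum).tsum_fiberwise fun x : ℕ × ℕ => x.1 * x.2
  have hfib : ∀ n : ℕ,
      ∑' (x : ↑((fun x : ℕ × ℕ => x.1 * x.2) ⁻¹' {n})), F (x : ℕ × ℕ).1 * G (x : ℕ × ℕ).2
        = (F * G) n := by
    intro n
    rcases eq_or_ne n 0 with rfl | hn
    · have hz : ∀ (x : ↑((fun x : ℕ × ℕ => x.1 * x.2) ⁻¹' {(0 : ℕ)})),
          F (x : ℕ × ℕ).1 * G (x : ℕ × ℕ).2 = 0 := by
        rintro ⟨⟨x1, x2⟩, hx⟩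
        simp only [Set.mem_preimage, Set.mem_singleton_iff, Nat.mul_eq_zero] at hx
        rcases hx with rfl | rfl <;> simp
      rw [tsum_congr hz, tsum_zero, ArithmeticFunction.map_zero]
    · rw [show (fun x : ℕ × ℕ => x.1 * x.2) ⁻¹' {n} = ↑(n.divisorsAntidiagonal) by
        ext x; simp [Nat.mem_divisorsAntidiagonal, hn],
        Finset.tsum_subtype' n.divisorsAntidiagonal (fun x : ℕ × ℕ => F x.1 * G x.2),
        ArithmeticFunction.mul_apply]
  have hfun : (fun n : ℕ =>
      ∑' (x : ↑((fun x : ℕ × ℕ => x.1 * x.2) ⁻¹' {n})), F (x : ℕ × ℕ).1 * G (x : ℕ × ℕ).2)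
        = ⇑(F * G) := funext hfib
  rwa [hfun] at key

lemma hasSum_Gf : ∀ N, HasSum (⇑(Gf N)) (zetaR 2 * ∏ j ∈ Finset.range N, zetaR (j + 2)) := by
  intro N
  induction N with
  | zero =>
    have h := hasSum_Zf 0
    simpa [Gf] using h
  | succ N ih =>
    have h := hasSum_mulArith (hasSum_Zf N) ih
    have heq : zetaR (N + 2) * (zetaR 2 * ∏ j ∈ Finset.range N, zetaR (j + 2))
        = zetaR 2 * ∏ j ∈ Finset.range (N + 1), zetaR (j + 2) := by
      rw [Finset.prod_range_succ]; ring
    rw [heq] at h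
    exact h

end GcdAux

set_option maxHeartbeats 1000000 in
/-- For the limiting multiplicative function `f` (with `f(p^α) = lim_n f_n(p^α)` and
`f(p) = (2p-1)/(p²(p-1))`), the distribution `D(g) = (d/ζ(2)) f(g)` with
`d = (∏_{j≥2} ζ(j))⁻¹` sums to `1` but has infinite expectation. -/
theorem gcd_distribution_infinite_expectation (f : ℕ → ℝ) (hf1 : f 1 = 1)
    (hmul : ∀ a b : ℕ, Nat.Coprime a b → f (a * b) = f a * f b)
    (hflim : ∀ p α : ℕ, p.Prime → 1 ≤ α →
      Tendsto (fun n : ℕ => fseq n p α) atTop (nhds (f (p ^ α))))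
    (hfp : ∀ p : ℕ, p.Prime →
      f p = (2 * (p : ℝ) - 1) / ((p : ℝ) ^ 2 * ((p : ℝ) - 1))) :
    (∑' g : ℕ, ((∏' j : ℕ, zetaR (j + 2))⁻¹ / zetaR 2) * f (g + 1) = 1) ∧
    ¬ Summable (fun g : ℕ =>
        ((g : ℝ) + 1) * (((∏' j : ℕ, zetaR (j + 2))⁻¹ / zetaR 2) * f (g + 1))) := by
  classical
  open GcdAux in
  set Q : ℝ := ∏' j : ℕ, zetaR (j + 2) with hQdef
  have hz2 : 0 < zetaR 2 := by simpa using GcdAux.zetaR_pos 0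
  -- summability of the logs of the zeta values
  have hlogsum : Summable fun j : ℕ => Real.log (zetaR (j + 2)) := by
    have hB : Summable (fun n : ℕ => 1 / ((n : ℝ) + 2) ^ 2) := by
      have h := (GcdAux.hasSum_zetaR 0).summable.comp_injective (add_left_injective 1)
      refine h.congr fun n => ?_
      simp [Function.comp]
      ring_nf
    set B := ∑' n : ℕ, 1 / ((n : ℝ) + 2) ^ 2 with hBdef
    have hBnn : 0 ≤ B := tsum_nonneg fun n => by positivity
    have hbound : ∀ j : ℕ, Real.log (zetaR (j + 2)) ≤ B * (1 / 2 : ℝ) ^ j := by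
      intro j
      have hzj := GcdAux.hasSum_zetaR j
      have hshift : Summable (fun n : ℕ => 1 / ((n : ℝ) + 2) ^ (j + 2)) := by
        have h := hzj.summable.comp_injective (add_left_injective 1)
        refine h.congr fun n => ?_
        simp [Function.comp]
        ring_nf
      have hz_eq : zetaR (j + 2) = 1 + ∑' n : ℕ, 1 / ((n : ℝ) + 2) ^ (j + 2) := by
        rw [← hzj.tsum_eq, hzj.summable.tsum_eq_zero_add]
        norm_num
        exact tsum_congr fun n => by push_cast; ring_nf
      have hle : ∑' n : ℕ, 1 / ((n : ℝ) + 2) ^ (j + 2) ≤ B * (1 / 2 : ℝ) ^ j := by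
        have hterm : ∀ n : ℕ, 1 / ((n : ℝ) + 2) ^ (j + 2)
            ≤ (1 / 2 : ℝ) ^ j * (1 / ((n : ℝ) + 2) ^ 2) := by
          intro n
          have h2 : (2 : ℝ) ≤ (n : ℝ) + 2 := le_add_of_nonneg_left (Nat.cast_nonneg n)
          have hpos : (0 : ℝ) < (n : ℝ) + 2 := by positivity
          have hinv : 1 / ((n : ℝ) + 2) ≤ 1 / 2 := by
            rw [div_le_div_iff₀ hpos two_pos]; linarith
          calc 1 / ((n : ℝ) + 2) ^ (j + 2)
              = (1 / ((n : ℝ) + 2)) ^ j * (1 / ((n : ℝ) + 2) ^ 2) := by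
                rw [div_pow, one_pow, div_mul_div_comm, one_mul, ← pow_add]
            _ ≤ (1 / 2 : ℝ) ^ j * (1 / ((n : ℝ) + 2) ^ 2) :=
                mul_le_mul_of_nonneg_right (pow_le_pow_left₀ (by positivity) hinv j)
                  (by positivity)
        calc ∑' n : ℕ, 1 / ((n : ℝ) + 2) ^ (j + 2)
            ≤ ∑' n : ℕ, (1 / 2 : ℝ) ^ j * (1 / ((n : ℝ) + 2) ^ 2) :=
              Summable.tsum_le_tsum hterm hshift (hB.mul_left _)
          _ = (1 / 2 : ℝ) ^ j * B := by rw [tsum_mul_left]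
          _ = B * (1 / 2 : ℝ) ^ j := mul_comm _ _
      calc Real.log (zetaR (j + 2)) ≤ zetaR (j + 2) - 1 :=
            Real.log_le_sub_one_of_pos (GcdAux.zetaR_pos j)
        _ = ∑' n : ℕ, 1 / ((n : ℝ) + 2) ^ (j + 2) := by rw [hz_eq]; ring
        _ ≤ B * (1 / 2 : ℝ) ^ j := hle
    refine Summable.of_nonneg_of_le
      (fun j => Real.log_nonneg (GcdAux.one_le_zetaR j)) hbound ?_
    exact summable_geometric_two.mul_left B
  have hQmult : Multipliable fun j : ℕ => zetaR (j + 2) :=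
    Real.multipliable_of_summable_log (fun j => GcdAux.zetaR_pos j) hlogsum
  have hQtend : Tendsto (fun N : ℕ => ∏ j ∈ Finset.range N, zetaR (j + 2)) atTop (nhds Q) :=
    hQmult.hasProd.tendsto_prod_nat
  have hQ1 : 1 ≤ Q := by
    refine ge_of_tendsto' hQtend fun N => ?_
    calc (1 : ℝ) = ∏ _j ∈ Finset.range N, (1 : ℝ) := by simp
      _ ≤ ∏ j ∈ Finset.range N, zetaR (j + 2) :=
          Finset.prod_le_prod (fun _ _ => zero_le_one) (fun j _ => GcdAux.one_le_zetaR j)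
  have hQ0 : Q ≠ 0 := by positivity
  -- limits of fseq
  have hfpow_tend : ∀ p α : ℕ, p.Prime →
      Tendsto (fun N : ℕ => fseq (N + 1) p α) atTop (nhds (f (p ^ α))) := by
    intro p α hp
    rcases Nat.eq_zero_or_pos α with rfl | hα
    · simp only [pow_zero, hf1, GcdAux.fseq_zero_eq_one p]
      exact tendsto_const_nhds
    · have hcomp : Tendsto (fun N : ℕ => N + 1) atTop atTop := tendsto_add_atTop_nat 1
      exact (hflim p α hp hα).comp hcomp
  have hfseq_mono : ∀ p α : ℕ, Monotone fun N : ℕ => fseq (N + 1) p α :=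
    fun p α => monotone_nat_of_le_succ fun N => GcdAux.fseq_le_succ p N α
  have hfpow_ge : ∀ p α : ℕ, p.Prime → ∀ N, fseq (N + 1) p α ≤ f (p ^ α) :=
    fun p α hp => (hfseq_mono p α).ge_of_tendsto (hfpow_tend p α hp)
  have hfpow_nonneg : ∀ p α : ℕ, p.Prime → 0 ≤ f (p ^ α) :=
    fun p α hp => le_trans (GcdAux.fseq_nonneg p 1 α) (hfpow_ge p α hp 0)
  -- factorizations
  have hffact : ∀ n : ℕ, n ≠ 0 → f n = n.factorization.prod fun p k => f (p ^ k) :=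
    fun n hn => Nat.multiplicative_factorization f hmul hf1 hn
  have hGfact : ∀ N n, n ≠ 0 →
      GcdAux.Gf N n = n.factorization.prod fun p k => fseq (N + 1) p k := by
    intro N n hn
    rw [ArithmeticFunction.IsMultiplicative.multiplicative_factorization _ (GcdAux.Gf_mult N) hn]
    refine Finsupp.prod_congr fun p hp => ?_
    have hprime : p.Prime := Nat.prime_of_mem_primeFactors (by
      rwa [← Nat.support_factorization])
    rw [GcdAux.Gf_prime_pow hprime]
  have hf_nonneg : ∀ n : ℕ, n ≠ 0 → 0 ≤ f n := by
    intro n hn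
    rw [hffact n hn, Finsupp.prod]
    refine Finset.prod_nonneg fun p hp => ?_
    exact hfpow_nonneg p _ (Nat.prime_of_mem_primeFactors (by rwa [← Nat.support_factorization]))
  set f' : ℕ → ℝ := fun n => if n = 0 then 0 else f n with hf'def
  have hGle : ∀ N n, GcdAux.Gf N n ≤ f' n := by
    intro N n
    rcases eq_or_ne n 0 with rfl | hn
    · simp [hf'def]
    · simp only [hf'def, if_neg hn]
      rw [hGfact N n hn, hffact n hn, Finsupp.prod, Finsupp.prod]
      refine Finset.prod_le_prod (fun p _ => GcdAux.fseq_nonneg p _ _) fun p hp => ?_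
      exact hfpow_ge p _
        (Nat.prime_of_mem_primeFactors (by rwa [← Nat.support_factorization])) N
  have hGtend : ∀ n : ℕ, Tendsto (fun N => GcdAux.Gf N n) atTop (nhds (f' n)) := by
    intro n
    rcases eq_or_ne n 0 with rfl | hn
    · simp only [hf'def, if_pos rfl, ArithmeticFunction.map_zero]
      exact tendsto_const_nhds
    · have hrw : ∀ N, GcdAux.Gf N n
          = ∏ p ∈ n.factorization.support, fseq (N + 1) p (n.factorization p) :=
        fun N => by rw [hGfact N n hn]; rfl
      simp only [hrw, hf'def, if_neg hn, hffact n hn, Finsupp.prod]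
      refine tendsto_finset_prod _ fun p hp => ?_
      exact hfpow_tend p _
        (Nat.prime_of_mem_primeFactors (by rwa [← Nat.support_factorization]))
  -- sums of the truncations
  set S : ℕ → ℝ := fun N => zetaR 2 * ∏ j ∈ Finset.range N, zetaR (j + 2) with hSdef
  have hS : ∀ N, HasSum (⇑(GcdAux.Gf N)) (S N) := fun N => GcdAux.hasSum_Gf N
  have hStend : Tendsto S atTop (nhds (zetaR 2 * Q)) := hQtend.const_mul (zetaR 2)
  have hSmono : Monotone S := by
    refine monotone_nat_of_le_succ fun N => ?_
    simp only [hSdef, Finset.prod_range_succ, ← mul_assoc]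
    have h1 : 0 ≤ zetaR 2 * ∏ j ∈ Finset.range N, zetaR (j + 2) := by
      refine mul_nonneg hz2.le (Finset.prod_nonneg fun j _ => (GcdAux.zetaR_pos j).le)
    exact le_mul_of_one_le_right h1 (GcdAux.one_le_zetaR N)
  have hSle : ∀ N, S N ≤ zetaR 2 * Q := fun N => hSmono.ge_of_tendsto hStend N
  have hf'_nonneg : ∀ n, 0 ≤ f' n := by
    intro n
    rcases eq_or_ne n 0 with rfl | hn
    · simp [hf'def]
    · simpa [hf'def, if_neg hn] using hf_nonneg n hn
  have hpartial : ∀ M : ℕ, ∑ n ∈ Finset.range M, f' n ≤ zetaR 2 * Q := by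
    intro M
    have h1 : Tendsto (fun N => ∑ n ∈ Finset.range M, GcdAux.Gf N n) atTop
        (nhds (∑ n ∈ Finset.range M, f' n)) :=
      tendsto_finset_sum _ fun n _ => hGtend n
    refine le_of_tendsto h1 (Eventually.of_forall fun N => ?_)
    calc ∑ n ∈ Finset.range M, GcdAux.Gf N n
        ≤ ∑' n, GcdAux.Gf N n :=
          Summable.sum_le_tsum _ (fun n _ => GcdAux.Gf_nonneg N n) (hS N).summable
      _ = S N := (hS N).tsum_eq
      _ ≤ zetaR 2 * Q := hSle N
  have hf'sum : Summable f' := summable_of_sum_range_le hf'_nonneg hpartial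
  have hle1 : ∑' n, f' n ≤ zetaR 2 * Q := Summable.tsum_le_of_sum_range_le hf'sum hpartial
  have hge1 : zetaR 2 * Q ≤ ∑' n, f' n := by
    refine le_of_tendsto hStend (Eventually.of_forall fun N => ?_)
    rw [← (hS N).tsum_eq]
    exact Summable.tsum_le_tsum (hGle N) (hS N).summable hf'sum
  have htsum : ∑' n, f' n = zetaR 2 * Q := le_antisymm hle1 hge1
  have hshift : ∑' g : ℕ, f (g + 1) = zetaR 2 * Q := by
    have h0 : ∑' n, f' n = f' 0 + ∑' g : ℕ, f' (g + 1) := hf'sum.tsum_eq_zero_add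
    have h1 : (fun g : ℕ => f' (g + 1)) = fun g : ℕ => f (g + 1) :=
      funext fun g => by simp [hf'def]
    rw [htsum, h1] at h0
    simpa [hf'def] using h0.symm
  constructor
  · rw [tsum_mul_left, hshift]
    field_simp
  · intro hsum
    set c : ℝ := Q⁻¹ / zetaR 2 with hcdef
    have hc : 0 < c := div_pos (inv_pos.mpr (lt_of_lt_of_le one_pos hQ1)) hz2
    have hinj : Function.Injective (fun p : Nat.Primes => ((p : ℕ) - 1 : ℕ)) := by
      intro p q h
      have hp2 := p.2.two_le
      have hq2 := q.2.two_le
      simp only at h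
      exact Subtype.ext (by omega)
    have h2 := hsum.comp_injective hinj
    simp only [Function.comp_def] at h2
    have hkey : ∀ p : Nat.Primes, c * (((p : ℕ) : ℝ))⁻¹
        ≤ (((((p : ℕ) - 1 : ℕ) : ℝ)) + 1) * (c * f (((p : ℕ) - 1) + 1)) := by
      rintro ⟨p, hp⟩
      have h2p : 2 ≤ p := hp.two_le
      have hsub : (p : ℕ) - 1 + 1 = p := by omega
      have hcast : (((p - 1 : ℕ)) : ℝ) + 1 = (p : ℝ) := by
        have h1 : ((p - 1 : ℕ) : ℝ) = (p : ℝ) - 1 := by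
          rw [Nat.cast_sub (by omega)]
          norm_num
        rw [h1]; ring
      simp only [hsub, hcast]
      rw [hfp p hp]
      have hP : (2 : ℝ) ≤ (p : ℝ) := by exact_mod_cast h2p
      have hp0 : (0 : ℝ) < (p : ℝ) := by linarith
      have hp1 : (0 : ℝ) < (p : ℝ) - 1 := by linarith
      rw [show (p : ℝ) * (c * ((2 * (p : ℝ) - 1) / ((p : ℝ) ^ 2 * ((p : ℝ) - 1))))
          = c * (((p : ℝ) * (2 * (p : ℝ) - 1)) / ((p : ℝ) ^ 2 * ((p : ℝ) - 1))) by ring]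
      refine mul_le_mul_of_nonneg_left ?_ hc.le
      rw [inv_eq_one_div, div_le_div_iff₀ hp0 (by positivity)]
      nlinarith
    have hsum3 : Summable fun p : Nat.Primes => c * (((p : ℕ) : ℝ))⁻¹ := by
      refine Summable.of_nonneg_of_le (fun p => by positivity) hkey h2
    have hsum4 : Summable fun p : Nat.Primes => (((p : ℕ) : ℝ))⁻¹ := by
      refine (hsum3.mul_left c⁻¹).congr fun p => ?_
      field_simp
    have hns : ¬ Summable fun p : Nat.Primes => (((p : ℕ) : ℝ)) ^ (-1 : ℝ) := by
      rw [Nat.Primes.summable_rpow]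
      norm_num
    exact hns (by simpa [Real.rpow_neg_one] using hsum4)
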